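/- For all real numbers x, y ≥ 0, (2x)^x · (2y)^y ≥ (x + y)^{x + y}, where real powers are used with the convention 0⁰ = 1. -/

import Mathlib

/-- For all reals `x, y ≥ 0`,
`(2x)^x (2y)^y ≥ (x + y)^(x + y)` (real powers, with `0⁰ = 1`). -/
theorem two_point_power_inequality (x y : ℝ) (hx : 0 ≤ x) (hy : 0 ≤ y) :
    (x + y) ^ (x + y) ≤ (2 * x) ^ x * (2 * y) ^ y := by
  rcases eq_or_lt_of_le hx with hx0 | hx0
  · subst hx0
    simp only [zero_add, mul_zero, Real.rpow_zero, one_mul]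
    exact Real.rpow_le_rpow hy (by linarith) hy
  rcases eq_or_lt_of_le hy with hy0 | hy0
  · subst hy0
    simp only [add_zero, mul_zero, Real.rpow_zero, mul_one]
    exact Real.rpow_le_rpow hx (by linarith) hx
  set s : ℝ := x + y with hs
  have hs0 : 0 < s := by positivity
  have h2x : (0:ℝ) < 2 * x := by linarith
  have h2y : (0:ℝ) < 2 * y := by linarith
  have key := Real.geom_mean_le_arith_mean2_weighted
    (w₁ := x / s) (w₂ := y / s) (p₁ := s / (2 * x)) (p₂ := s / (2 * y))
    (by positivity) (by positivity) (by positivity) (by positivity)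
    (by field_simp; exact hs.symm)
  have hrhs : x / s * (s / (2 * x)) + y / s * (s / (2 * y)) = 1 := by
    field_simp
    ring
  rw [hrhs] at key
  have key2 : ((s / (2 * x)) ^ (x / s) * (s / (2 * y)) ^ (y / s)) ^ s ≤ 1 := by
    calc ((s / (2 * x)) ^ (x / s) * (s / (2 * y)) ^ (y / s)) ^ s
        ≤ (1:ℝ) ^ s := Real.rpow_le_rpow (by positivity) key hs0.le
      _ = 1 := Real.one_rpow s
  rw [Real.mul_rpow (by positivity) (by positivity), ← Real.rpow_mul (by positivity),
    ← Real.rpow_mul (by positivity), div_mul_cancel₀ _ hs0.ne',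
    div_mul_cancel₀ _ hs0.ne',
    Real.div_rpow hs0.le h2x.le, Real.div_rpow hs0.le h2y.le,
    div_mul_div_comm, div_le_one (by positivity)] at key2
  calc s ^ s = s ^ x * s ^ y := by rw [← Real.rpow_add hs0]
    _ ≤ (2 * x) ^ x * (2 * y) ^ y := key2
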